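/- Define φ: gl-pairs of elementary matrices by φ(E_{ij}, E_{kl}) = δ_{il}δ_{jk} if j < 0 and i ≥ 0; φ(E_{ij}, E_{kl}) = -δ_{il}δ_{jk} if i < 0 and j ≥ 0; and 0 otherwise. Then φ, extended bilinearly, is a 2-cocycle on the Lie algebra gl_∞ of ℤ×ℤ matrices with finitely many nonzero entries: φ(A,B) = -φ(B,A) and φ([A,B],C) + φ([B,C],A) + φ([C,A],B) = 0. -/

import Mathlib

/-- gl_∞: ℤ×ℤ matrices over k with finitely many nonzero entries. -/
abbrev glInf (k : Type*) [Field k] := (ℤ × ℤ) →₀ k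

/-- Matrix multiplication on gl_∞. -/
noncomputable def glMul {k : Type*} [Field k] (A B : glInf k) : glInf k :=
  A.sum fun x a => B.sum fun y b =>
    if x.2 = y.1 then Finsupp.single (x.1, y.2) (a * b) else 0

/-- The Lie bracket [A,B] = AB - BA on gl_∞. -/
noncomputable def glBr {k : Type*} [Field k] (A B : glInf k) : glInf k :=
  glMul A B - glMul B A

/-- The elementary matrix E_{ij}. -/
noncomputable def glE {k : Type*} [Field k] (i j : ℤ) : glInf k :=
  Finsupp.single (i, j) 1

/-- The sign entering the cocycle: 1 if j < 0 ≤ i, -1 if i < 0 ≤ j, 0 otherwise. -/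
def glSgn (i j : ℤ) : ℤ :=
  if j < 0 ∧ 0 ≤ i then 1 else if i < 0 ∧ 0 ≤ j then -1 else 0

/-- The bilinear extension of φ(E_{ij}, E_{kl}) = δ_{il} δ_{jk} glSgn i j. -/
noncomputable def glPhi {k : Type*} [Field k] (A B : glInf k) : k :=
  A.sum fun x a => a * B (x.2, x.1) * ((glSgn x.1 x.2 : ℤ) : k)

section aux
variable {k : Type*} [Field k]

lemma glSgn_eq (i j : ℤ) :
    glSgn i j = (if 0 ≤ i then 1 else 0) - (if 0 ≤ j then 1 else 0) := by
  unfold glSgn; split_ifs <;> omega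

lemma cast_glSgn (i j : ℤ) :
    ((glSgn i j : ℤ) : k) = (if 0 ≤ i then (1:k) else 0) - (if 0 ≤ j then (1:k) else 0) := by
  rw [glSgn_eq]; push_cast; split_ifs <;> norm_num

lemma glPhi_zero_left (B : glInf k) : glPhi 0 B = 0 := by
  simp [glPhi]

lemma glPhi_zero_right (A : glInf k) : glPhi A 0 = 0 := by
  simp [glPhi]

lemma glPhi_add_left (A A' B : glInf k) : glPhi (A + A') B = glPhi A B + glPhi A' B := by
  unfold glPhi
  rw [Finsupp.sum_add_index' (by intro x; simp) (by intro x a a'; ring)]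

lemma glPhi_add_right (A B B' : glInf k) : glPhi A (B + B') = glPhi A B + glPhi A B' := by
  unfold glPhi
  rw [← Finsupp.sum_add]
  congr 1; funext x a
  simp [Finsupp.add_apply]; ring

lemma glPhi_sub_left (A A' B : glInf k) : glPhi (A - A') B = glPhi A B - glPhi A' B := by
  unfold glPhi
  rw [Finsupp.sum_sub_index (by intro x a a'; ring)]

lemma glPhi_single_single (x y : ℤ × ℤ) (a b : k) :
    glPhi (Finsupp.single x a) (Finsupp.single y b) =
      if y = (x.2, x.1) then a * b * ((glSgn x.1 x.2 : ℤ) : k) else 0 := by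
  unfold glPhi
  rw [Finsupp.sum_single_index (by simp)]
  rw [Finsupp.single_apply]
  split_ifs <;> simp

lemma glMul_zero_left (B : glInf k) : glMul 0 B = 0 := by
  simp [glMul]

lemma glMul_zero_right (A : glInf k) : glMul A 0 = 0 := by
  simp [glMul]

lemma glMul_add_left (A A' B : glInf k) : glMul (A + A') B = glMul A B + glMul A' B := by
  unfold glMul
  rw [Finsupp.sum_add_index']
  · intro x; simp
  · intro x a a'
    rw [← Finsupp.sum_add]
    congr 1; funext y b
    split_ifs <;> simp [add_mul]

lemma glMul_add_right (A B B' : glInf k) : glMul A (B + B') = glMul A B + glMul A B' := by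
  unfold glMul
  rw [← Finsupp.sum_add]
  congr 1; funext x a
  rw [Finsupp.sum_add_index']
  · intro y; split_ifs <;> simp
  · intro y b b'; split_ifs <;> simp [mul_add]

lemma glMul_single_single (x y : ℤ × ℤ) (a b : k) :
    glMul (Finsupp.single x a) (Finsupp.single y b) =
      if x.2 = y.1 then Finsupp.single (x.1, y.2) (a * b) else 0 := by
  unfold glMul
  rw [Finsupp.sum_single_index (by simp)]
  rw [Finsupp.sum_single_index (by split_ifs <;> simp)]

lemma glBr_zero_left (B : glInf k) : glBr 0 B = 0 := by
  simp [glBr, glMul_zero_left, glMul_zero_right]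

lemma glBr_zero_right (A : glInf k) : glBr A 0 = 0 := by
  simp [glBr, glMul_zero_left, glMul_zero_right]

lemma glBr_add_left (A A' B : glInf k) : glBr (A + A') B = glBr A B + glBr A' B := by
  simp [glBr, glMul_add_left, glMul_add_right]; abel

lemma glBr_add_right (A B B' : glInf k) : glBr A (B + B') = glBr A B + glBr A B' := by
  simp [glBr, glMul_add_left, glMul_add_right]; abel

noncomputable def Jc (A B C : glInf k) : k :=
  glPhi (glBr A B) C + glPhi (glBr B C) A + glPhi (glBr C A) B

lemma Jc_add1 (A A' B C : glInf k) : Jc (A + A') B C = Jc A B C + Jc A' B C := by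
  simp [Jc, glBr_add_left, glBr_add_right, glPhi_add_left, glPhi_add_right]; ring

lemma Jc_add2 (A B B' C : glInf k) : Jc A (B + B') C = Jc A B C + Jc A B' C := by
  simp [Jc, glBr_add_left, glBr_add_right, glPhi_add_left, glPhi_add_right]; ring

lemma Jc_add3 (A B C C' : glInf k) : Jc A B (C + C') = Jc A B C + Jc A B C' := by
  simp [Jc, glBr_add_left, glBr_add_right, glPhi_add_left, glPhi_add_right]; ring

lemma Jc_zero1 (B C : glInf k) : Jc 0 B C = 0 := by
  simp [Jc, glBr_zero_left, glBr_zero_right, glPhi_zero_left, glPhi_zero_right]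

lemma Jc_zero2 (A C : glInf k) : Jc A 0 C = 0 := by
  simp [Jc, glBr_zero_left, glBr_zero_right, glPhi_zero_left, glPhi_zero_right]

lemma Jc_zero3 (A B : glInf k) : Jc A B 0 = 0 := by
  simp [Jc, glBr_zero_left, glBr_zero_right, glPhi_zero_left, glPhi_zero_right]

lemma glPhi_ite (c : Prop) [Decidable c] (X B : glInf k) :
    glPhi (if c then X else 0) B = if c then glPhi X B else 0 := by
  split_ifs <;> simp [glPhi_zero_left]

set_option maxHeartbeats 2000000 in
lemma Jc_single (x y z : ℤ × ℤ) (a b c : k) :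
    Jc (Finsupp.single x a) (Finsupp.single y b) (Finsupp.single z c) = 0 := by
  obtain ⟨x1, x2⟩ := x; obtain ⟨y1, y2⟩ := y; obtain ⟨z1, z2⟩ := z
  simp only [Jc, glBr, glMul_single_single, glPhi_sub_left, glPhi_ite,
    glPhi_single_single, glPhi_zero_left, Prod.mk.injEq]
  simp only [cast_glSgn]
  by_cases h1 : x2 = y1 <;> by_cases h2 : x1 = y2 <;> by_cases h3 : y2 = z1 <;>
    by_cases h4 : y1 = z2 <;> by_cases h5 : x2 = z1 <;> by_cases h6 : x1 = z2 <;>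
    simp_all <;> (intros; subst_vars)
  all_goals try omega
  all_goals try ring
  all_goals (split_ifs <;> (intros; subst_vars) <;> try omega)
  all_goals try ring
  all_goals simp_all
  all_goals try omega
  all_goals try ring

lemma Jc_single_single (x y : ℤ × ℤ) (a b : k) (C : glInf k) :
    Jc (Finsupp.single x a) (Finsupp.single y b) C = 0 := by
  induction C using Finsupp.induction with
  | zero => exact Jc_zero3 _ _
  | single_add z c f hz hc ih => rw [Jc_add3, ih, Jc_single, add_zero]

lemma Jc_single_gen (x : ℤ × ℤ) (a : k) (B C : glInf k) :
    Jc (Finsupp.single x a) B C = 0 := by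
  induction B using Finsupp.induction with
  | zero => exact Jc_zero2 _ _
  | single_add y b f hy hb ih => rw [Jc_add2, ih, Jc_single_single, add_zero]

lemma Jc_eq_zero (A B C : glInf k) : Jc A B C = 0 := by
  induction A using Finsupp.induction with
  | zero => exact Jc_zero1 _ _
  | single_add x a f hx ha ih => rw [Jc_add1, ih, Jc_single_gen, add_zero]

lemma glSgn_antisymm (i j : ℤ) : glSgn j i = -glSgn i j := by
  unfold glSgn; split_ifs <;> omega

lemma glPhi_skew_single (x y : ℤ × ℤ) (a b : k) :
    glPhi (Finsupp.single x a) (Finsupp.single y b) =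
      -glPhi (Finsupp.single y b) (Finsupp.single x a) := by
  obtain ⟨x1, x2⟩ := x; obtain ⟨y1, y2⟩ := y
  rw [glPhi_single_single, glPhi_single_single]
  simp only [Prod.mk.injEq]
  split_ifs with h h' h' <;> try (exfalso; omega)
  · obtain ⟨e1, e2⟩ := h; subst e1; subst e2
    rw [glSgn_antisymm]; push_cast; ring
  · simp

lemma glPhi_skew_s (x : ℤ × ℤ) (a : k) (B : glInf k) :
    glPhi (Finsupp.single x a) B = -glPhi B (Finsupp.single x a) := by
  induction B using Finsupp.induction with
  | zero => simp [glPhi_zero_left, glPhi_zero_right]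
  | single_add y b f hy hb ih =>
      rw [glPhi_add_right, glPhi_add_left, ih, glPhi_skew_single]; ring

lemma glPhi_skew (A B : glInf k) : glPhi A B = -glPhi B A := by
  induction A using Finsupp.induction with
  | zero => simp [glPhi_zero_left, glPhi_zero_right]
  | single_add x a f hx ha ih =>
      rw [glPhi_add_left, glPhi_add_right, ih, glPhi_skew_s]; ring

end aux

/-- φ takes the prescribed values on elementary matrices, is skew-symmetric,
and is a 2-cocycle on the Lie algebra gl_∞. -/
theorem stmt_8 (k : Type*) [Field k] [CharZero k] :
    (∀ i j a b : ℤ, glPhi (glE i j) (glE a b) =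
      (if j = a ∧ i = b then ((glSgn i j : ℤ) : k) else 0)) ∧
    (∀ A B : glInf k, glPhi A B = -glPhi B A) ∧
    (∀ A B C : glInf k,
      glPhi (glBr A B) C + glPhi (glBr B C) A + glPhi (glBr C A) B = 0) := by
  refine ⟨?_, glPhi_skew, fun A B C => Jc_eq_zero A B C⟩
  intro i j a b
  rw [glE, glE, glPhi_single_single]
  simp only [Prod.mk.injEq]
  split_ifs with h h' h' <;> try (exfalso; omega)
  · simp
  · simp
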